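/- arXiv:2309.09977 — 2 statements merged into one kernel-verified Lean document; each statement's English description precedes it below -/
import Mathlib

section
/- Suppose ψ : ℝ^d → ℝ is differentiable and L-smooth with L > 0, and let (v^{s,q}) be the Markov chain coordinate descent iterates generated from an initial point v^{0,0} with step size η > 0, block sequence k^0,…,k^{S−1}, and Q inner updates per block. Then for every s ∈ {0,…,S−1} and q ∈ {0,…,Q−1}, ‖∇_{k^s} ψ(v^{s,q}) − ∇_{k^s} ψ(v^{0,0})‖ ≤ η·L·S·Q·‖∇ψ(v^{0,0})‖·(1 + ηL)^{Qs+q}. -/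
/-- For a block `k` (blocks given by the assignment `blk : Fin d → K` of coordinates
to blocks), the vector `∇̄_k ψ(v)` agreeing with the gradient of `ψ` at `v` on the
coordinates of block `k` and zero elsewhere.  Note `‖maskedGrad blk ψ v k‖ = ‖∇_k ψ(v)‖`. -/
noncomputable def maskedGrad {d : ℕ} {K : Type*} [DecidableEq K]
    (blk : Fin d → K) (ψ : EuclideanSpace ℝ (Fin d) → ℝ)
    (v : EuclideanSpace ℝ (Fin d)) (k : K) : EuclideanSpace ℝ (Fin d) :=
  WithLp.toLp 2 (fun i => if blk i = k then gradient ψ v i else 0)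

lemma euclid_norm_le_of_coord {d : ℕ} (f g : EuclideanSpace ℝ (Fin d))
    (h : ∀ i, |f i| ≤ |g i|) : ‖f‖ ≤ ‖g‖ := by
  rw [EuclideanSpace.norm_eq, EuclideanSpace.norm_eq]
  apply Real.sqrt_le_sqrt
  apply Finset.sum_le_sum
  intro i _
  have hi := h i
  simp only [Real.norm_eq_abs]
  nlinarith [abs_nonneg (f i), abs_nonneg (g i)]

lemma maskedGrad_sub_norm_le {d : ℕ} {K : Type*} [DecidableEq K]
    (blk : Fin d → K) (ψ : EuclideanSpace ℝ (Fin d) → ℝ)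
    (x y : EuclideanSpace ℝ (Fin d)) (k : K) :
    ‖maskedGrad blk ψ x k - maskedGrad blk ψ y k‖ ≤ ‖gradient ψ x - gradient ψ y‖ := by
  apply euclid_norm_le_of_coord
  intro i
  by_cases h : blk i = k <;>
    simp [maskedGrad, h, PiLp.sub_apply, abs_nonneg]

lemma maskedGrad_norm_le {d : ℕ} {K : Type*} [DecidableEq K]
    (blk : Fin d → K) (ψ : EuclideanSpace ℝ (Fin d) → ℝ)
    (x : EuclideanSpace ℝ (Fin d)) (k : K) :
    ‖maskedGrad blk ψ x k‖ ≤ ‖gradient ψ x‖ := by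
  apply euclid_norm_le_of_coord
  intro i
  by_cases h : blk i = k <;> simp [maskedGrad, h, abs_nonneg]

lemma pow_sub_one_le_aux {x : ℝ} (hx : 0 ≤ x) :
    ∀ n : ℕ, (1 + x) ^ n - 1 ≤ n * x * (1 + x) ^ n := by
  intro n
  induction n with
  | zero => simp
  | succ n ih =>
    have hp : (0:ℝ) ≤ (1 + x) ^ n := by positivity
    have h1 : (1:ℝ) ^ (n + 1) ≤ (1 + x) ^ (n + 1) :=
      pow_le_pow_left₀ (by norm_num) (by linarith) _
    simp only [one_pow] at h1
    have he : (1 + x) ^ (n + 1) = (1 + x) ^ n * (1 + x) := by ring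
    have h2 := mul_le_mul_of_nonneg_right ih (by linarith : (0:ℝ) ≤ 1 + x)
    have h3 := mul_le_mul_of_nonneg_left h1 hx
    push_cast
    nlinarith [h2, h3]


/-- **Surrogate offset bound (general step size).** For Markov chain coordinate descent
iterates `v^{s,q}` of an `L`-smooth differentiable `ψ`, for all `s < S` and `q < Q`,
`‖∇_{k^s} ψ(v^{s,q}) − ∇_{k^s} ψ(v^{0,0})‖ ≤ η L S Q ‖∇ψ(v^{0,0})‖ (1+ηL)^{Qs+q}`. -/
theorem mccd_surrogate_offset_bound
    {d : ℕ} (hd : 1 ≤ d) {K : Type*} [Fintype K] [DecidableEq K]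
    (blk : Fin d → K)
    (ψ : EuclideanSpace ℝ (Fin d) → ℝ) (L : ℝ) (hL : 0 < L)
    (hdiff : Differentiable ℝ ψ)
    (hsmooth : ∀ x y : EuclideanSpace ℝ (Fin d),
      ‖gradient ψ x - gradient ψ y‖ ≤ L * ‖x - y‖)
    (S Q : ℕ) (hS : 1 ≤ S) (hQ : 1 ≤ Q)
    (η : ℝ) (hη : 0 < η)
    (kseq : ℕ → K)
    (v : ℕ → ℕ → EuclideanSpace ℝ (Fin d))
    (hrecq : ∀ s < S, ∀ q < Q,
      v s (q + 1) = v s q - η • maskedGrad blk ψ (v s q) (kseq s))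
    (hrecs : ∀ s < S, v (s + 1) 0 = v s Q) :
    ∀ s < S, ∀ q < Q,
      ‖maskedGrad blk ψ (v s q) (kseq s) - maskedGrad blk ψ (v 0 0) (kseq s)‖
        ≤ η * L * S * Q * ‖gradient ψ (v 0 0)‖ * (1 + η * L) ^ (Q * s + q) := by
  have hQ0 : 0 < Q := hQ
  set G : ℝ := ‖gradient ψ (v 0 0)‖ with hG
  have hG0 : 0 ≤ G := norm_nonneg _
  set w : ℕ → EuclideanSpace ℝ (Fin d) := fun n => v (n / Q) (n % Q) with hw
  have hw0 : w 0 = v 0 0 := by simp [hw]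
  -- step recurrence for the flattened sequence
  have hstep : ∀ n, n + 1 < S * Q →
      w (n + 1) = w n - η • maskedGrad blk ψ (w n) (kseq (n / Q)) := by
    intro n hn
    have hnQ : n < S * Q := by omega
    have hdivS : n / Q < S := Nat.div_lt_iff_lt_mul hQ0 |>.mpr (by omega)
    have hmod : n % Q < Q := Nat.mod_lt _ hQ0
    by_cases hcase : n % Q + 1 < Q
    · have hdm := Nat.mod_add_div n Q
      have he1 : n + 1 = (n % Q + 1) + Q * (n / Q) := by omega
      have hdiv' : (n + 1) / Q = n / Q := by
        rw [he1, Nat.add_mul_div_left _ _ hQ0, Nat.div_eq_of_lt hcase, Nat.zero_add]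
      have hmod' : (n + 1) % Q = n % Q + 1 := by
        rw [he1, Nat.add_mul_mod_self_left, Nat.mod_eq_of_lt hcase]
      simp only [hw, hdiv', hmod']
      exact hrecq (n / Q) hdivS (n % Q) hmod
    · have hq : n % Q + 1 = Q := by omega
      have he1 : n + 1 = Q * (n / Q + 1) := by
        have hdm := Nat.mod_add_div n Q
        have hmul : Q * (n / Q + 1) = Q * (n / Q) + Q := Nat.mul_succ _ _
        omega
      have hdiv' : (n + 1) / Q = n / Q + 1 := by
        rw [he1, Nat.mul_div_cancel_left _ hQ0]
      have hmod' : (n + 1) % Q = 0 := by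
        rw [he1, Nat.mul_mod_right]
      simp only [hw, hdiv', hmod']
      rw [hrecs (n / Q) hdivS]
      have h := hrecq (n / Q) hdivS (n % Q) hmod
      rw [hq] at h
      exact h
  -- drift bound by induction
  have hdrift : ∀ n, n < S * Q →
      ‖w n - v 0 0‖ ≤ (G / L) * ((1 + η * L) ^ n - 1) := by
    intro n
    induction n with
    | zero => intro _; simp [hw0]
    | succ n ih =>
      intro hn
      have hn' : n < S * Q := by omega
      have ihn := ih hn'
      rw [hstep n hn]
      have h1 : ‖w n - η • maskedGrad blk ψ (w n) (kseq (n / Q)) - v 0 0‖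
          ≤ ‖w n - v 0 0‖ + η * ‖maskedGrad blk ψ (w n) (kseq (n / Q))‖ := by
        have : w n - η • maskedGrad blk ψ (w n) (kseq (n / Q)) - v 0 0
            = (w n - v 0 0) + (-(η • maskedGrad blk ψ (w n) (kseq (n / Q)))) := by abel
        rw [this]
        refine (norm_add_le _ _).trans ?_
        rw [norm_neg, norm_smul, Real.norm_eq_abs, abs_of_pos hη]
      have h2 : ‖maskedGrad blk ψ (w n) (kseq (n / Q))‖ ≤ L * ‖w n - v 0 0‖ + G := by
        have htri : ‖maskedGrad blk ψ (w n) (kseq (n / Q))‖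
            ≤ ‖maskedGrad blk ψ (w n) (kseq (n / Q))
                - maskedGrad blk ψ (v 0 0) (kseq (n / Q))‖
              + ‖maskedGrad blk ψ (v 0 0) (kseq (n / Q))‖ := by
          have := norm_add_le (maskedGrad blk ψ (w n) (kseq (n / Q))
              - maskedGrad blk ψ (v 0 0) (kseq (n / Q)))
              (maskedGrad blk ψ (v 0 0) (kseq (n / Q)))
          rwa [sub_add_cancel] at this
        calc ‖maskedGrad blk ψ (w n) (kseq (n / Q))‖
            ≤ ‖maskedGrad blk ψ (w n) (kseq (n / Q))
                - maskedGrad blk ψ (v 0 0) (kseq (n / Q))‖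
              + ‖maskedGrad blk ψ (v 0 0) (kseq (n / Q))‖ := htri
          _ ≤ ‖gradient ψ (w n) - gradient ψ (v 0 0)‖ + G := by
              gcongr
              · exact maskedGrad_sub_norm_le blk ψ _ _ _
              · exact maskedGrad_norm_le blk ψ _ _
          _ ≤ L * ‖w n - v 0 0‖ + G := by
              gcongr
              exact hsmooth _ _
      have hP : (0:ℝ) ≤ (1 + η * L) ^ n := by positivity
      have hηL : 0 < η * L := mul_pos hη hL
      have hDn : 0 ≤ ‖w n - v 0 0‖ := norm_nonneg _
      calc ‖w n - η • maskedGrad blk ψ (w n) (kseq (n / Q)) - v 0 0‖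
          ≤ ‖w n - v 0 0‖ + η * (L * ‖w n - v 0 0‖ + G) := by nlinarith [h1, h2]
        _ ≤ (G / L) * ((1 + η * L) ^ (n + 1) - 1) := by
            have hexp : (1 + η * L) ^ (n + 1) = (1 + η * L) ^ n * (1 + η * L) := by ring
            rw [hexp]
            have hL' : L ≠ 0 := ne_of_gt hL
            have key := mul_le_mul_of_nonneg_left ihn
              (by linarith : (0:ℝ) ≤ 1 + η * L)
            have hGL : G / L * L = G := div_mul_cancel₀ G hL'
            nlinarith [key, hGL]
  -- conclude
  intro s hs q hq
  have hn : Q * s + q < S * Q := by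
    calc Q * s + q < Q * s + Q := by omega
      _ = Q * (s + 1) := by ring
      _ ≤ Q * S := Nat.mul_le_mul_left _ (by omega)
      _ = S * Q := Nat.mul_comm _ _
  have hwn : w (Q * s + q) = v s q := by
    have hdiv : (Q * s + q) / Q = s := by
      rw [Nat.add_comm, Nat.add_mul_div_left _ _ hQ0, Nat.div_eq_of_lt hq, Nat.zero_add]
    have hmod : (Q * s + q) % Q = q := by
      rw [Nat.add_comm, Nat.add_mul_mod_self_left, Nat.mod_eq_of_lt hq]
    simp only [hw, hdiv, hmod]
  have hd1 := hdrift (Q * s + q) hn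
  rw [hwn] at hd1
  set n := Q * s + q with hndef
  have hP : (0:ℝ) ≤ (1 + η * L) ^ n := by positivity
  have hpow := pow_sub_one_le_aux (le_of_lt (mul_pos hη hL)) n
  calc ‖maskedGrad blk ψ (v s q) (kseq s) - maskedGrad blk ψ (v 0 0) (kseq s)‖
      ≤ ‖gradient ψ (v s q) - gradient ψ (v 0 0)‖ := maskedGrad_sub_norm_le blk ψ _ _ _
    _ ≤ L * ‖v s q - v 0 0‖ := hsmooth _ _
    _ ≤ L * ((G / L) * ((1 + η * L) ^ n - 1)) := by gcongr
    _ = G * ((1 + η * L) ^ n - 1) := by field_simp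
    _ ≤ G * (n * (η * L) * (1 + η * L) ^ n) := by
        apply mul_le_mul_of_nonneg_left hpow hG0
    _ ≤ η * L * S * Q * G * (1 + η * L) ^ n := by
        have hnSQ : (n : ℝ) ≤ (S : ℝ) * Q := by
          have : (n : ℕ) ≤ S * Q := le_of_lt hn
          exact_mod_cast this
        have hηL : (0:ℝ) ≤ η * L := le_of_lt (mul_pos hη hL)
        nlinarith [mul_le_mul_of_nonneg_right hnSQ (mul_nonneg hηL hP), hG0,
          mul_nonneg hηL hP]
end

section
/- Suppose ψ : ℝ^d → ℝ is differentiable and L-smooth with L > 0, and let (v^{s,q}) be the Markov chain coordinate descent iterates generated from an initial point v^{0,0} with step size η ∈ (0, 1/(LSQ)], block sequence k^0,…,k^{S−1}, and Q inner updates per block, with final iterate v^{S,0}. Then ⟨∇ψ(v^{0,0}), v^{S,0} − v^{0,0}⟩ ≤ −η·∑_{s=0}^{S−1} ∑_{q=0}^{Q−1} ‖∇_{k^s} ψ(v^{0,0})‖² + η·S·Q·C₁·‖∇ψ(v^{0,0})‖², where C₁ := η·e·L·S·Q. -/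
/-- The masking operator on vectors. -/
noncomputable def mask {d : ℕ} {K : Type*} [DecidableEq K] (blk : Fin d → K) (k : K)
    (w : EuclideanSpace ℝ (Fin d)) : EuclideanSpace ℝ (Fin d) :=
  WithLp.toLp 2 (fun i => if blk i = k then w i else 0)

lemma maskedGrad_eq_mask {d : ℕ} {K : Type*} [DecidableEq K]
    (blk : Fin d → K) (ψ : EuclideanSpace ℝ (Fin d) → ℝ)
    (v : EuclideanSpace ℝ (Fin d)) (k : K) :
    maskedGrad blk ψ v k = mask blk k (gradient ψ v) := rfl

lemma mask_inner {d : ℕ} {K : Type*} [DecidableEq K] (blk : Fin d → K) (k : K)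
    (w u : EuclideanSpace ℝ (Fin d)) :
    (inner ℝ w (mask blk k u) : ℝ) = inner ℝ (mask blk k w) (mask blk k u) := by
  simp only [PiLp.inner_apply, RCLike.inner_apply, starRingEnd_apply, star_trivial, mask, PiLp.toLp_apply]
  refine Finset.sum_congr rfl fun i _ => ?_
  split_ifs <;> ring

lemma mask_norm_le {d : ℕ} {K : Type*} [DecidableEq K] (blk : Fin d → K) (k : K)
    (w : EuclideanSpace ℝ (Fin d)) : ‖mask blk k w‖ ≤ ‖w‖ := by
  rw [EuclideanSpace.norm_eq, EuclideanSpace.norm_eq]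
  apply Real.sqrt_le_sqrt
  refine Finset.sum_le_sum fun i _ => ?_
  simp only [mask, PiLp.toLp_apply]
  split_ifs <;> simp [sq_nonneg]

lemma mask_sub {d : ℕ} {K : Type*} [DecidableEq K] (blk : Fin d → K) (k : K)
    (w u : EuclideanSpace ℝ (Fin d)) :
    mask blk k w - mask blk k u = mask blk k (w - u) := by
  ext i
  simp only [mask, PiLp.sub_apply, PiLp.toLp_apply]
  split_ifs <;> simp

set_option maxHeartbeats 1000000 in
/-- **Inner-product bound.** For Markov chain coordinate descent iterates of an `L`-smooth
differentiable `ψ` with step size `η ∈ (0, 1/(LSQ)]` and final iterate `v^{S,0}`,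
`⟨∇ψ(v⁰⁰), v^{S,0} − v⁰⁰⟩ ≤ −η ∑_{s<S} ∑_{q<Q} ‖∇_{k^s}ψ(v⁰⁰)‖² + η S Q C₁ ‖∇ψ(v⁰⁰)‖²`,
where `C₁ = η e L S Q`. -/
theorem mccd_inner_product_bound
    {d : ℕ} (hd : 1 ≤ d) {K : Type*} [Fintype K] [DecidableEq K]
    (blk : Fin d → K)
    (ψ : EuclideanSpace ℝ (Fin d) → ℝ) (L : ℝ) (hL : 0 < L)
    (hdiff : Differentiable ℝ ψ)
    (hsmooth : ∀ x y : EuclideanSpace ℝ (Fin d),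
      ‖gradient ψ x - gradient ψ y‖ ≤ L * ‖x - y‖)
    (S Q : ℕ) (hS : 1 ≤ S) (hQ : 1 ≤ Q)
    (η : ℝ) (hη : 0 < η) (hηub : η ≤ 1 / (L * S * Q))
    (kseq : ℕ → K)
    (v : ℕ → ℕ → EuclideanSpace ℝ (Fin d))
    (hrecq : ∀ s < S, ∀ q < Q,
      v s (q + 1) = v s q - η • maskedGrad blk ψ (v s q) (kseq s))
    (hrecs : ∀ s < S, v (s + 1) 0 = v s Q)
    (C₁ : ℝ) (hC₁ : C₁ = η * Real.exp 1 * L * S * Q) :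
    inner ℝ (gradient ψ (v 0 0)) (v S 0 - v 0 0)
      ≤ -η * ∑ s ∈ Finset.range S, ∑ q ∈ Finset.range Q,
            ‖maskedGrad blk ψ (v 0 0) (kseq s)‖ ^ 2
        + η * S * Q * C₁ * ‖gradient ψ (v 0 0)‖ ^ 2 := by
  set g0 : EuclideanSpace ℝ (Fin d) := gradient ψ (v 0 0) with hg0
  set G : ℝ := ‖g0‖ with hGdef
  have hG : 0 ≤ G := norm_nonneg _
  have hSR : (0:ℝ) < S := by exact_mod_cast hS
  have hQR : (0:ℝ) < Q := by exact_mod_cast hQ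
  have hLSQ : (0:ℝ) < L * S * Q := by positivity
  have hηLSQ : η * (L * S * Q) ≤ 1 := by
    rw [le_div_iff₀ hLSQ] at hηub; linarith
  -- one-step norm growth
  have step : ∀ s < S, ∀ q < Q, ∀ t : ℕ,
      ‖v s q - v 0 0‖ ≤ η * G * t * (1 + η * L) ^ t →
      ‖v s (q+1) - v 0 0‖ ≤ η * G * (t+1) * (1 + η * L) ^ (t+1) := by
    intro s hs q hq t ht
    have hMle : ‖maskedGrad blk ψ (v s q) (kseq s)‖ ≤ G + L * ‖v s q - v 0 0‖ := by
      have h1 : ‖maskedGrad blk ψ (v s q) (kseq s)‖ ≤ ‖gradient ψ (v s q)‖ := by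
        rw [maskedGrad_eq_mask]; exact mask_norm_le _ _ _
      have h2 : ‖gradient ψ (v s q) - g0‖ ≤ L * ‖v s q - v 0 0‖ := hsmooth _ _
      have h3 : ‖gradient ψ (v s q)‖ - ‖g0‖ ≤ ‖gradient ψ (v s q) - g0‖ :=
        norm_sub_norm_le _ _
      linarith
    have hmove : ‖v s (q+1) - v 0 0‖
        ≤ ‖v s q - v 0 0‖ + η * ‖maskedGrad blk ψ (v s q) (kseq s)‖ := by
      rw [hrecq s hs q hq]
      have heq : v s q - η • maskedGrad blk ψ (v s q) (kseq s) - v 0 0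
          = (v s q - v 0 0) - η • maskedGrad blk ψ (v s q) (kseq s) := by abel
      rw [heq]
      calc ‖(v s q - v 0 0) - η • maskedGrad blk ψ (v s q) (kseq s)‖
          ≤ ‖v s q - v 0 0‖ + ‖η • maskedGrad blk ψ (v s q) (kseq s)‖ := norm_sub_le _ _
        _ = ‖v s q - v 0 0‖ + η * ‖maskedGrad blk ψ (v s q) (kseq s)‖ := by
            rw [norm_smul, Real.norm_eq_abs, abs_of_pos hη]
    have hP1 : (1:ℝ) ≤ (1 + η * L) ^ t := one_le_pow₀ (by nlinarith)
    have hpow : (1 + η * L) ^ (t+1) = (1 + η * L) ^ t * (1 + η * L) := pow_succ _ _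
    have c1 : ‖v s (q+1) - v 0 0‖ ≤ (1 + η * L) * ‖v s q - v 0 0‖ + η * G := by
      nlinarith [mul_le_mul_of_nonneg_left hMle hη.le]
    have c2 : (1 + η * L) * ‖v s q - v 0 0‖
        ≤ (1 + η * L) * (η * G * t * (1 + η * L) ^ t) :=
      mul_le_mul_of_nonneg_left ht (by nlinarith)
    have c3 : (1:ℝ) ≤ (1 + η * L) ^ t * (1 + η * L) := by
      nlinarith [mul_nonneg (sub_nonneg.mpr hP1) (mul_nonneg hη.le hL.le)]
    have c4 := mul_le_mul_of_nonneg_left c3 (mul_nonneg hη.le hG)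
    rw [hpow]
    push_cast
    nlinarith [c1, c2, c4]
  -- cumulative distance bound
  have key : ∀ s < S, ∀ q ≤ Q,
      ‖v s q - v 0 0‖ ≤ η * G * (s*Q+q : ℕ) * (1 + η * L) ^ (s*Q+q) := by
    intro s
    induction s with
    | zero =>
      intro hs q
      induction q with
      | zero => intro _; simp
      | succ q ihq =>
        intro hq
        have hqQ : q < Q := by omega
        have := step 0 hs q hqQ (0*Q+q) (ihq (le_of_lt hqQ))
        have hidx : 0*Q+(q+1) = (0*Q+q)+1 := rfl
        rw [hidx]
        exact_mod_cast this
    | succ s ih =>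
      intro hs q
      have hsS : s < S := Nat.lt_of_succ_lt hs
      induction q with
      | zero =>
        intro _
        have h0 : v (s+1) 0 = v s Q := hrecs s hsS
        have := ih hsS Q le_rfl
        have hidx : (s+1)*Q+0 = s*Q+Q := by ring
        rw [h0, hidx]
        exact this
      | succ q ihq =>
        intro hq
        have hqQ : q < Q := by omega
        have := step (s+1) hs q hqQ ((s+1)*Q+q) (ihq (le_of_lt hqQ))
        have hidx : (s+1)*Q+(q+1) = ((s+1)*Q+q)+1 := rfl
        rw [hidx]
        exact_mod_cast this
  -- distance bound in final form
  have dist : ∀ s < S, ∀ q < Q, L * ‖v s q - v 0 0‖ ≤ C₁ * G := by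
    intro s hs q hq
    have hk := key s hs q (le_of_lt hq)
    have htSQ : ((s*Q+q : ℕ):ℝ) ≤ (S:ℝ) * Q := by
      have h1 : (s:ℝ) + 1 ≤ S := by exact_mod_cast hs
      have h2 : (q:ℝ) + 1 ≤ Q := by exact_mod_cast hq
      have h3 : ((s:ℝ)+1) * Q ≤ (S:ℝ) * Q :=
        mul_le_mul_of_nonneg_right h1 hQR.le
      push_cast
      nlinarith
    have hpow : (1 + η * L) ^ (s*Q+q) ≤ Real.exp 1 := by
      have h1 : (1 + η * L) ≤ Real.exp (η * L) := by
        have := Real.add_one_le_exp (η * L); linarith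
      have h2 : (1 + η * L) ^ (s*Q+q) ≤ Real.exp (η * L) ^ (s*Q+q) :=
        pow_le_pow_left₀ (by positivity) h1 (s*Q+q)
      have h3 : Real.exp (η * L) ^ (s*Q+q) = Real.exp (((s*Q+q : ℕ):ℝ) * (η * L)) := by
        rw [← Real.exp_nat_mul]
      have h4 : ((s*Q+q : ℕ):ℝ) * (η * L) ≤ 1 := by
        have : ((s*Q+q : ℕ):ℝ) * (η * L) ≤ ((S:ℝ)*Q) * (η * L) :=
          mul_le_mul_of_nonneg_right htSQ (by positivity)
        nlinarith
      have h5 : Real.exp (((s*Q+q : ℕ):ℝ) * (η * L)) ≤ Real.exp 1 := Real.exp_le_exp.mpr h4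
      calc (1 + η * L) ^ (s*Q+q) ≤ Real.exp (η * L) ^ (s*Q+q) := h2
        _ = Real.exp (((s*Q+q : ℕ):ℝ) * (η * L)) := h3
        _ ≤ Real.exp 1 := h5
    have hPnn : (0:ℝ) ≤ (1 + η * L) ^ (s*Q+q) := by positivity
    have htn : (0:ℝ) ≤ ((s*Q+q : ℕ):ℝ) := Nat.cast_nonneg _
    have hE : (0:ℝ) < Real.exp 1 := Real.exp_pos 1
    have hbd : ‖v s q - v 0 0‖ ≤ η * G * ((S:ℝ)*Q) * Real.exp 1 := by
      have h6 : ((s*Q+q : ℕ):ℝ) * (1 + η * L) ^ (s*Q+q) ≤ ((S:ℝ)*Q) * Real.exp 1 :=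
        mul_le_mul htSQ hpow hPnn (by positivity)
      have h7 : η * G * (((s*Q+q : ℕ):ℝ) * (1 + η * L) ^ (s*Q+q)) ≤ η * G * (((S:ℝ)*Q) * Real.exp 1) :=
        mul_le_mul_of_nonneg_left h6 (by positivity)
      calc ‖v s q - v 0 0‖ ≤ η * G * ((s*Q+q : ℕ):ℝ) * (1 + η * L) ^ (s*Q+q) := hk
        _ = η * G * (((s*Q+q : ℕ):ℝ) * (1 + η * L) ^ (s*Q+q)) := by ring
        _ ≤ η * G * (((S:ℝ)*Q) * Real.exp 1) := h7
        _ = η * G * ((S:ℝ)*Q) * Real.exp 1 := by ring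
    calc L * ‖v s q - v 0 0‖ ≤ L * (η * G * ((S:ℝ)*Q) * Real.exp 1) :=
          mul_le_mul_of_nonneg_left hbd hL.le
      _ = C₁ * G := by rw [hC₁]; ring
  -- per-term inner product bound
  have pterm : ∀ s < S, ∀ q < Q,
      (inner ℝ g0 (v s (q+1) - v s q) : ℝ)
        ≤ -η * ‖maskedGrad blk ψ (v 0 0) (kseq s)‖ ^ 2 + η * C₁ * G ^ 2 := by
    intro s hs q hq
    set m0 : EuclideanSpace ℝ (Fin d) := maskedGrad blk ψ (v 0 0) (kseq s) with hm0
    set M : EuclideanSpace ℝ (Fin d) := maskedGrad blk ψ (v s q) (kseq s) with hM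
    have hdiffvec : v s (q+1) - v s q = -(η • M) := by
      rw [hrecq s hs q hq]; abel
    have hinner1 : (inner ℝ g0 (v s (q+1) - v s q) : ℝ) = -(η * inner ℝ g0 M) := by
      rw [hdiffvec, inner_neg_right, real_inner_smul_right]
    have hmask1 : (inner ℝ g0 M : ℝ) = inner ℝ m0 M := by
      rw [hM, maskedGrad_eq_mask, hm0, maskedGrad_eq_mask, hg0]
      exact mask_inner blk (kseq s) _ _
    have hsplit : (inner ℝ m0 M : ℝ) = ‖m0‖^2 + inner ℝ m0 (M - m0) := by
      rw [inner_sub_right, real_inner_self_eq_norm_sq]; ring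
    have hm0G : ‖m0‖ ≤ G := by
      rw [hm0, maskedGrad_eq_mask]; exact mask_norm_le _ _ _
    have hMm0 : ‖M - m0‖ ≤ C₁ * G := by
      rw [hM, hm0, maskedGrad_eq_mask, maskedGrad_eq_mask, mask_sub]
      calc ‖mask blk (kseq s) (gradient ψ (v s q) - gradient ψ (v 0 0))‖
          ≤ ‖gradient ψ (v s q) - gradient ψ (v 0 0)‖ := mask_norm_le _ _ _
        _ ≤ L * ‖v s q - v 0 0‖ := hsmooth _ _
        _ ≤ C₁ * G := dist s hs q hq
    have hcs : |(inner ℝ m0 (M - m0) : ℝ)| ≤ ‖m0‖ * ‖M - m0‖ :=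
      abs_real_inner_le_norm _ _
    have hlow : (inner ℝ m0 (M - m0) : ℝ) ≥ -(G * (C₁ * G)) := by
      have h1 : ‖m0‖ * ‖M - m0‖ ≤ G * (C₁ * G) :=
        mul_le_mul hm0G hMm0 (norm_nonneg _) hG
      have h2 := neg_abs_le (inner ℝ m0 (M - m0) : ℝ)
      linarith
    have hfin : (inner ℝ g0 M : ℝ) ≥ ‖m0‖^2 - C₁ * G^2 := by
      rw [hmask1, hsplit]; nlinarith
    rw [hinner1]
    nlinarith [mul_le_mul_of_nonneg_left hfin hη.le]
  -- telescoping
  have tele : v S 0 - v 0 0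
      = ∑ s ∈ Finset.range S, ∑ q ∈ Finset.range Q, (v s (q+1) - v s q) := by
    have houter : v S 0 - v 0 0 = ∑ s ∈ Finset.range S, (v (s+1) 0 - v s 0) :=
      (Finset.sum_range_sub (fun s => v s 0) S).symm
    rw [houter]
    refine Finset.sum_congr rfl fun s hs => ?_
    have hsS : s < S := Finset.mem_range.mp hs
    rw [hrecs s hsS]
    exact (Finset.sum_range_sub (fun q => v s q) Q).symm
  rw [tele]
  have hsum : (inner ℝ g0 (∑ s ∈ Finset.range S, ∑ q ∈ Finset.range Q,
      (v s (q+1) - v s q)) : ℝ)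
      = ∑ s ∈ Finset.range S, ∑ q ∈ Finset.range Q,
        (inner ℝ g0 (v s (q+1) - v s q) : ℝ) := by
    rw [inner_sum]
    exact Finset.sum_congr rfl fun s _ => inner_sum _ _ _
  rw [hsum]
  calc ∑ s ∈ Finset.range S, ∑ q ∈ Finset.range Q,
        (inner ℝ g0 (v s (q+1) - v s q) : ℝ)
      ≤ ∑ s ∈ Finset.range S, ∑ q ∈ Finset.range Q,
        (-η * ‖maskedGrad blk ψ (v 0 0) (kseq s)‖ ^ 2 + η * C₁ * G ^ 2) := by
        refine Finset.sum_le_sum fun s hs => Finset.sum_le_sum fun q hq => ?_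
        exact pterm s (Finset.mem_range.mp hs) q (Finset.mem_range.mp hq)
    _ = -η * ∑ s ∈ Finset.range S, ∑ q ∈ Finset.range Q,
          ‖maskedGrad blk ψ (v 0 0) (kseq s)‖ ^ 2
        + η * S * Q * C₁ * G ^ 2 := by
        simp only [Finset.sum_add_distrib, Finset.sum_const, Finset.card_range,
          nsmul_eq_mul, Finset.mul_sum]
        push_cast
        ring_nf
end
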